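/- (One-step distance recursion.) In non-stationary approximate MPI with parameters m ≥ 0 and ℓ ≥ 1 on a finite MDP, for every k ≥ 1 the distance satisfies the pointwise inequality d_k ≤ γ P_{π_*} d_{k−1} − γ P_{π_*} ε_{k−1} + ∑_{i=0}^{m−1} (γ^ℓ P_{k,ℓ})^{i} b_{k−1}, where π_* is any optimal policy (v_{π_*} = v_*) and P_{k,ℓ} = P_{π_k} P_{π_{k−1}} ⋯ P_{π_{k−ℓ+1}}. -/
import Mathlib


structure MDP (X A : Type) [Fintype X] [Fintype A] where
  P : X → A → X → ℝ
  r : X → A → ℝ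
  γ : ℝ
  P_nonneg : ∀ x a y, 0 ≤ P x a y
  P_sum : ∀ x a, ∑ y, P x a y = 1
  γ_pos : 0 < γ
  γ_lt_one : γ < 1

namespace MDP

variable {X A : Type} [Fintype X] [Fintype A]

/-- Bellman operator of a stationary policy. -/
noncomputable def T (M : MDP X A) (π : X → A) (v : X → ℝ) : X → ℝ :=
  fun x => M.r x (π x) + M.γ * ∑ y, M.P x (π x) y * v y

/-- Action-value function. -/
noncomputable def Q (M : MDP X A) (v : X → ℝ) (x : X) (a : A) : ℝ :=
  M.r x a + M.γ * ∑ y, M.P x a y * v y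

/-- `π` is greedy with respect to `v` (action form). -/
def IsGreedy (M : MDP X A) (π : X → A) (v : X → ℝ) : Prop :=
  ∀ x, M.T π v x = ⨆ a : A, M.Q v x a

/-- `π` is greedy with respect to `v` (componentwise max over policies form). -/
def IsGreedyPol (M : MDP X A) (π : X → A) (v : X → ℝ) : Prop :=
  ∀ x, M.T π v x = ⨆ π' : X → A, M.T π' v x

/-- Composed Bellman operator `T_{π_k} T_{π_{k-1}} ⋯ T_{π_{k-n+1}}`. -/
noncomputable def Tcomp (M : MDP X A) (π : ℤ → X → A) : ℕ → ℤ → (X → ℝ) → (X → ℝ)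
  | 0, _ => id
  | (n+1), k => fun v => M.T (π k) (M.Tcomp π n (k-1) v)

/-- Transition kernel of a stationary policy, as a matrix. -/
def Pmat (M : MDP X A) (π : X → A) : Matrix X X ℝ :=
  Matrix.of fun x y => M.P x (π x) y

/-- Composed kernel `P_{π_k} P_{π_{k-1}} ⋯ P_{π_{k-n+1}}`. -/
noncomputable def Pcomp (M : MDP X A) [DecidableEq X] (π : ℤ → X → A) : ℕ → ℤ → Matrix X X ℝ
  | 0, _ => 1
  | (n+1), k => M.Pmat (π k) * M.Pcomp π n (k-1)

/-- `n`-fold products `(γ P_{π_1}) ⋯ (γ P_{π_n})`. -/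
def prodSet (M : MDP X A) [DecidableEq X] : ℕ → Set (Matrix X X ℝ)
  | 0 => {1}
  | (n+1) => {Q | ∃ (π : X → A) (Q' : Matrix X X ℝ), Q' ∈ M.prodSet n ∧ Q = (M.γ • M.Pmat π) * Q'}

/-- `𝕡_n`: convex combinations of `n`-fold products of discounted kernels. -/
noncomputable def Gamma (M : MDP X A) [DecidableEq X] (n : ℕ) : Set (Matrix X X ℝ) :=
  convexHull ℝ (M.prodSet n)

end MDP

/-- Residual `b_k = T_{π_{k+1}} v_k − T_{π_{k+1},ℓ} T_{π_{k+1}} v_k`. -/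
noncomputable def bres {X A : Type} [Fintype X] [Fintype A] (M : MDP X A) (π : ℤ → X → A) (ℓ : ℕ)
    (v : ℕ → X → ℝ) (k : ℕ) : X → ℝ :=
  fun x => M.T (π ((k : ℤ) + 1)) (v k) x
    - M.Tcomp π ℓ ((k : ℤ) + 1) (M.T (π ((k : ℤ) + 1)) (v k)) x

/-- Distance `d_k = v_* − v_k + ε_k`. -/
noncomputable def dres {X : Type} (vstar : X → ℝ) (v err : ℕ → X → ℝ) (k : ℕ) : X → ℝ :=
  fun x => vstar x - v k x + err k x
section
variable {X A : Type} [Fintype X] [Fintype A]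

lemma T_sub (M : MDP X A) (π : X → A) (u w : X → ℝ) (x : X) :
    M.T π u x - M.T π w x = (M.γ • M.Pmat π).mulVec (u - w) x := by
  simp only [MDP.T, MDP.Pmat, Matrix.mulVec, dotProduct, Matrix.smul_apply,
    Matrix.of_apply, Pi.sub_apply, smul_eq_mul, mul_sub, Finset.sum_sub_distrib,
    Finset.mul_sum]
  ring_nf

lemma Tcomp_sub [DecidableEq X] (M : MDP X A) (π : ℤ → X → A) (n : ℕ) :
    ∀ (kk : ℤ) (u w : X → ℝ),
      M.Tcomp π n kk u - M.Tcomp π n kk w = (M.γ ^ n • M.Pcomp π n kk).mulVec (u - w) := by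
  induction n with
  | zero => intro kk u w; simp [MDP.Tcomp, MDP.Pcomp]
  | succ n ih =>
    intro kk u w
    funext x
    have h1 : M.Tcomp π (n+1) kk u x - M.Tcomp π (n+1) kk w x
        = (M.γ • M.Pmat (π kk)).mulVec (M.Tcomp π n (kk-1) u - M.Tcomp π n (kk-1) w) x := by
      simpa [MDP.Tcomp] using T_sub M (π kk) (M.Tcomp π n (kk-1) u) (M.Tcomp π n (kk-1) w) x
    show M.Tcomp π (n+1) kk u x - M.Tcomp π (n+1) kk w x = _
    rw [h1, ih (kk-1) u w, Matrix.mulVec_mulVec]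
    congr 1
    simp [MDP.Pcomp, Matrix.smul_mul, Matrix.mul_smul, pow_succ, smul_smul]
end
section
variable {X A : Type} [Fintype X] [Fintype A]

lemma iter_sub [DecidableEq X] {Qm : Matrix X X ℝ} {f : (X → ℝ) → (X → ℝ)}
    (hf : ∀ u w, f u - f w = Qm.mulVec (u - w)) (m : ℕ) (u w : X → ℝ) :
    f^[m] u - f^[m] w = (Qm ^ m).mulVec (u - w) := by
  induction m with
  | zero => simp
  | succ m ih =>
    rw [Function.iterate_succ', Function.comp_apply, Function.comp_apply, hf, ih,
      Matrix.mulVec_mulVec, ← pow_succ']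

lemma iter_telescope [DecidableEq X] {Qm : Matrix X X ℝ} {f : (X → ℝ) → (X → ℝ)}
    (hf : ∀ u w, f u - f w = Qm.mulVec (u - w)) (m : ℕ) (w : X → ℝ) (x : X) :
    w x - f^[m] w x = ∑ i ∈ Finset.range m, (Qm ^ i).mulVec (w - f w) x := by
  induction m with
  | zero => simp
  | succ m ih =>
    rw [Finset.sum_range_succ, ← ih]
    have h : f^[m] w - f^[m+1] w = (Qm ^ m).mulVec (w - f w) := by
      rw [Function.iterate_succ, Function.comp_apply, iter_sub hf]
    have := congrFun h x
    rw [Pi.sub_apply] at this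
    linarith
end
section
variable {X A : Type} [Fintype X] [Fintype A]

lemma greedy_ge [Nonempty A] (M : MDP X A) {πg : X → A} {v' : X → ℝ}
    (hg : M.IsGreedyPol πg v') (π' : X → A) (x : X) : M.T π' v' x ≤ M.T πg v' x := by
  rw [hg x]
  have hbdd : BddAbove (Set.range fun p : X → A => M.T p v' x) := by
    apply BddAbove.mono (t := Set.range fun a : A => M.Q v' x a)
    · rintro _ ⟨p, rfl⟩
      exact ⟨p x, rfl⟩
    · exact (Set.finite_range _).bddAbove
  exact le_ciSup hbdd π'
end

/-- One-step distance recursion: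
`d_k ≤ γ P_* d_{k−1} − γ P_* ε_{k−1} + ∑_{i=0}^{m−1} (γ^ℓ P_{k,ℓ})^i b_{k−1}`. -/
theorem mpi_distance_recursion
    {X A : Type} [Fintype X] [Fintype A] [Nonempty X] [Nonempty A] [DecidableEq X]
    (M : MDP X A)
    (vpi : (X → A) → X → ℝ) (hvpi : ∀ π : X → A, M.T π (vpi π) = vpi π)
    (vstar : X → ℝ) (hvstar : ∀ x, vstar x = ⨆ π : X → A, vpi π x)
    (πstar : X → A) (hopt : vpi πstar = vstar)
    (m ℓ : ℕ) (hℓ : 1 ≤ ℓ)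
    (v : ℕ → X → ℝ) (π : ℤ → X → A) (err : ℕ → X → ℝ)
    (herr0 : err 0 = fun _ => 0)
    (hgreedy : ∀ k : ℕ, 1 ≤ k → M.IsGreedyPol (π (k : ℤ)) (v (k - 1)))
    (hv : ∀ k : ℕ, 1 ≤ k →
      v k = fun x => (M.Tcomp π ℓ (k : ℤ))^[m] (M.T (π (k : ℤ)) (v (k - 1))) x + err k x)
    (k : ℕ) (hk : 1 ≤ k) :
    ∀ x, dres vstar v err k x ≤
      (M.γ • M.Pmat πstar).mulVec (dres vstar v err (k - 1)) x
        - (M.γ • M.Pmat πstar).mulVec (err (k - 1)) x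
        + ∑ i ∈ Finset.range m,
            ((M.γ ^ ℓ • M.Pcomp π ℓ (k : ℤ)) ^ i).mulVec (bres M π ℓ v (k - 1)) x := by

  intro x
  have hcast : ((k - 1 : ℕ) : ℤ) + 1 = (k : ℤ) := by omega
  set w : X → ℝ := M.T (π (k : ℤ)) (v (k - 1)) with hw
  have hf : ∀ u u' : X → ℝ, M.Tcomp π ℓ (k:ℤ) u - M.Tcomp π ℓ (k:ℤ) u'
      = (M.γ ^ ℓ • M.Pcomp π ℓ (k:ℤ)).mulVec (u - u') :=
    fun u u' => Tcomp_sub M π ℓ (k:ℤ) u u'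
  have hb : bres M π ℓ v (k-1) = w - M.Tcomp π ℓ (k:ℤ) w := by
    funext y
    simp only [bres, hcast, Pi.sub_apply, hw]
  have hdk : dres vstar v err k x = vstar x - (M.Tcomp π ℓ (k:ℤ))^[m] w x := by
    simp only [dres, hv k hk]
    ring
  have hstar : M.T πstar vstar = vstar := by
    have := hvpi πstar
    rwa [hopt] at this
  have hgr := greedy_ge M (hgreedy k hk) πstar x
  have hT := T_sub M πstar vstar (v (k-1)) x
  have h2 : (M.γ • M.Pmat πstar).mulVec (vstar - v (k-1)) x
      = (M.γ • M.Pmat πstar).mulVec (dres vstar v err (k-1)) x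
        - (M.γ • M.Pmat πstar).mulVec (err (k-1)) x := by
    have harg : vstar - v (k-1) = dres vstar v err (k-1) - err (k-1) := by
      funext y
      simp only [Pi.sub_apply, dres]
      ring
    rw [harg, Matrix.mulVec_sub, Pi.sub_apply]
  have h3 : w x - (M.Tcomp π ℓ (k:ℤ))^[m] w x
      = ∑ i ∈ Finset.range m, ((M.γ^ℓ • M.Pcomp π ℓ (k:ℤ)) ^ i).mulVec (bres M π ℓ v (k-1)) x := by
    rw [hb]
    exact iter_telescope hf m w x
  rw [hdk]
  have hsx := congrFun hstar x
  linarith [hgr, hT, h2, h3, hsx]
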